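/- arXiv:0906.1083 — 2 statements merged into one kernel-verified Lean document; each statement's English description precedes it below -/
import Mathlib

section
/- Let $R$ be a commutative ring of prime characteristic $p$, let $I \subseteq R$ be an ideal, and for $c \geq 0$ write $K_c = (I^{[p^c]} : I)$. Let $s \geq 1$ and let $\beta_1, \dots, \beta_s \geq 1$ be integers with $\beta_1 + \dots + \beta_s = e$. Then the product of ideals $K_{\beta_1} \cdot K_{\beta_2}^{[p^{\beta_1}]} \cdot K_{\beta_3}^{[p^{\beta_1+\beta_2}]} \cdots K_{\beta_s}^{[p^{\beta_1 + \dots + \beta_{s-1}}]}$ is contained in $K_e = (I^{[p^e]} : I)$. -/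
open Ideal Finset

private lemma frob_key_step
    (R : Type*) [CommRing R] (p : ℕ) [Fact p.Prime] [CharP R p]
    (I : Ideal R) (a b : ℕ) :
    ((I.map (iterateFrobenius R p a)).colon I) *
      (((I.map (iterateFrobenius R p b)).colon I).map (iterateFrobenius R p a)) ≤
      (I.map (iterateFrobenius R p (a + b))).colon I := by
  rw [Ideal.mul_le]
  intro x hx y hy
  -- reduce membership of y in the mapped ideal
  have hy' : ((I.map (iterateFrobenius R p b)).colon I).map (iterateFrobenius R p a) ≤
      ((I.map (iterateFrobenius R p (a + b))).colon I).colon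
        ((I.map (iterateFrobenius R p a)).colon I) := by
    rw [Ideal.map_le_iff_le_comap]
    intro z hz
    simp only [Ideal.mem_comap, Submodule.mem_colon, smul_eq_mul]
    intro x' hx' w hw
    -- goal: iterateFrobenius a z * x' * w ∈ I^[p^(a+b)]
    have h1 : x' * w ∈ I.map (iterateFrobenius R p a) := (Submodule.mem_colon).mp hx' w hw
    have h2 : Ideal.span {z} * I ≤ I.map (iterateFrobenius R p b) := by
      rw [Ideal.span_singleton_mul_le_iff]
      intro u hu
      have := (Submodule.mem_colon).mp hz u hu
      rwa [smul_eq_mul] at this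
    have h3 : Ideal.span {iterateFrobenius R p a z} * I.map (iterateFrobenius R p a) ≤
        I.map (iterateFrobenius R p (a + b)) := by
      have := Ideal.map_mono (f := iterateFrobenius R p a) h2
      rw [Ideal.map_mul, Ideal.map_span, Set.image_singleton, Ideal.map_map,
        ← iterateFrobenius_add] at this
      exact this
    have : iterateFrobenius R p a z * (x' * w) ∈
        Ideal.span {iterateFrobenius R p a z} * I.map (iterateFrobenius R p a) :=
      Ideal.mul_mem_mul (Ideal.mem_span_singleton_self _) h1
    have := h3 this
    rwa [← mul_assoc] at this
  have := (Submodule.mem_colon).mp (hy' hy) x hx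
  rwa [smul_eq_mul, mul_comm] at this

private lemma frob_colon_prod_aux
    (R : Type*) [CommRing R] (p : ℕ) [Fact p.Prime] [CharP R p]
    (I : Ideal R) (β : ℕ → ℕ) : ∀ s : ℕ,
    (∏ i ∈ Finset.range s,
        ((I.map (iterateFrobenius R p (β i))).colon I).map
          (iterateFrobenius R p (∑ j ∈ Finset.range i, β j))) ≤
      (I.map (iterateFrobenius R p (∑ i ∈ Finset.range s, β i))).colon I := by
  intro s
  induction s with
  | zero =>
      simp only [Finset.range_zero, Finset.prod_empty, Finset.sum_empty,
        iterateFrobenius_zero, Ideal.map_id]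
      rw [Ideal.one_eq_top]
      intro x _
      rw [Submodule.mem_colon]
      intro w hw
      rw [smul_eq_mul]
      exact Ideal.mul_mem_left _ _ hw
  | succ n ih =>
      rw [Finset.prod_range_succ, Finset.sum_range_succ]
      calc _ ≤ ((I.map (iterateFrobenius R p (∑ i ∈ Finset.range n, β i))).colon I) *
            (((I.map (iterateFrobenius R p (β n))).colon I).map
              (iterateFrobenius R p (∑ j ∈ Finset.range n, β j))) :=
            Ideal.mul_mono ih le_rfl
        _ ≤ _ := frob_key_step R p I _ _

/-- With `K c = (I^[p^c] : I)`, the product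
`K β₁ * (K β₂)^[p^β₁] * (K β₃)^[p^(β₁+β₂)] * ⋯ * (K βₛ)^[p^(β₁+⋯+βₛ₋₁)]`
is contained in `K e` whenever `β₁ + ⋯ + βₛ = e` with `s ≥ 1` and each `βᵢ ≥ 1`. -/
theorem frobenius_colon_prod_le
    (R : Type*) [CommRing R] (p : ℕ) [Fact p.Prime] [CharP R p]
    (I : Ideal R) (K : ℕ → Ideal R)
    (hK : ∀ c, K c = (I.map (iterateFrobenius R p c)).colon I)
    (s : ℕ) (hs : 1 ≤ s) (β : ℕ → ℕ) (hβ : ∀ i < s, 1 ≤ β i)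
    (e : ℕ) (he : ∑ i ∈ Finset.range s, β i = e) :
    (∏ i ∈ Finset.range s,
        (K (β i)).map (iterateFrobenius R p (∑ j ∈ Finset.range i, β j))) ≤ K e := by
  subst he
  simp only [hK]
  exact frob_colon_prod_aux R p I β s
end

section
/- Let $\mathbb{K}$ be a field of prime characteristic $p$, let $R = \mathbb{K}[\![x, y, z]\!]$ be the formal power series ring in three variables, and let $I = (xy, yz)$. Then for every integer $e \geq 1$, the colon ideal $K_e = (I^{[p^e]} : I)$ is generated by the three monomials $x^{p^e} y^{p^e - 1}$, $x^{p^e - 1} y^{p^e - 1} z^{p^e - 1}$, and $y^{p^e - 1} z^{p^e}$. -/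
open MvPowerSeries

/-- A power series ring over a field of characteristic `p` has characteristic `p`. -/
instance mvPowerSeries_charP (K : Type*) [Field K] (p : ℕ) [CharP K p] (σ : Type*) :
    CharP (MvPowerSeries σ K) p :=
  charP_of_injective_algebraMap' K p

open Finsupp

section Aux

variable {σ K : Type*} [CommRing K]

/-- Membership in a principal monomial ideal of a multivariate power series ring,
characterized coefficientwise. -/
lemma mem_span_monomial1 {a : σ →₀ ℕ} {f : MvPowerSeries σ K} :
    f ∈ Ideal.span {monomial a 1} ↔ ∀ d, coeff d f ≠ 0 → a ≤ d := by
  rw [Ideal.mem_span_singleton]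
  constructor
  · rintro ⟨g, rfl⟩ d hd
    rw [coeff_monomial_mul] at hd
    by_contra hle
    rw [if_neg hle] at hd
    exact hd rfl
  · intro h
    refine ⟨@id (MvPowerSeries σ K) (fun d => coeff (d + a) f), ?_⟩
    ext d
    rw [coeff_monomial_mul]
    split_ifs with hle
    · rw [one_mul]
      show coeff d f = coeff (d - a + a) f
      rw [tsub_add_cancel_of_le hle]
    · by_contra hne
      exact hle (h d (by simpa using hne))

/-- Membership in a monomial ideal with two generators, characterized coefficientwise. -/
lemma mem_span_monomial2 {a b : σ →₀ ℕ} {f : MvPowerSeries σ K} :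
    f ∈ Ideal.span {monomial a 1, monomial b 1} ↔
      ∀ d, coeff d f ≠ 0 → a ≤ d ∨ b ≤ d := by
  classical
  rw [Ideal.span_insert]
  constructor
  · intro h d hd
    obtain ⟨f1, hf1, f2, hf2, rfl⟩ := Submodule.mem_sup.mp h
    rw [map_add] at hd
    rcases (by by_contra hc; push_neg at hc; rw [hc.1, hc.2, add_zero] at hd; exact hd rfl :
        coeff d f1 ≠ 0 ∨ coeff d f2 ≠ 0) with h' | h'
    · exact Or.inl (mem_span_monomial1.mp hf1 d h')
    · exact Or.inr (mem_span_monomial1.mp hf2 d h')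
  · intro h
    set f1 : MvPowerSeries σ K := fun d => if a ≤ d then coeff d f else 0 with hf1def
    have h1 : f1 ∈ Ideal.span {monomial a 1} := by
      refine mem_span_monomial1.mpr fun d hd => ?_
      by_contra hle
      exact hd (by rw [coeff_apply, hf1def]; simp [hle])
    have h2 : f - f1 ∈ Ideal.span {monomial b 1} := by
      refine mem_span_monomial1.mpr fun d hd => ?_
      rw [map_sub] at hd
      have hcf1 : coeff d f1 = if a ≤ d then coeff d f else 0 := rfl
      by_cases hle : a ≤ d
      · rw [hcf1, if_pos hle, sub_self] at hd; exact absurd rfl hd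
      · rw [hcf1, if_neg hle, sub_zero] at hd
        exact (h d hd).resolve_left hle
    have hsum : f = f1 + (f - f1) := by ring
    exact hsum ▸ Submodule.add_mem_sup h1 h2

/-- Membership in a monomial ideal with three generators, characterized coefficientwise. -/
lemma mem_span_monomial3 {a b c : σ →₀ ℕ} {f : MvPowerSeries σ K} :
    f ∈ Ideal.span {monomial a 1, monomial b 1, monomial c 1} ↔
      ∀ d, coeff d f ≠ 0 → a ≤ d ∨ b ≤ d ∨ c ≤ d := by
  classical
  rw [Ideal.span_insert]
  constructor
  · intro h d hd
    obtain ⟨f1, hf1, f2, hf2, rfl⟩ := Submodule.mem_sup.mp h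
    rw [map_add] at hd
    rcases (by by_contra hc; push_neg at hc; rw [hc.1, hc.2, add_zero] at hd; exact hd rfl :
        coeff d f1 ≠ 0 ∨ coeff d f2 ≠ 0) with h' | h'
    · exact Or.inl (mem_span_monomial1.mp hf1 d h')
    · exact Or.inr (mem_span_monomial2.mp hf2 d h')
  · intro h
    set f1 : MvPowerSeries σ K := fun d => if a ≤ d then coeff d f else 0 with hf1def
    have h1 : f1 ∈ Ideal.span {monomial a 1} := by
      refine mem_span_monomial1.mpr fun d hd => ?_
      by_contra hle
      exact hd (by rw [coeff_apply, hf1def]; simp [hle])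
    have h2 : f - f1 ∈ Ideal.span {monomial b 1, monomial c 1} := by
      refine mem_span_monomial2.mpr fun d hd => ?_
      rw [map_sub] at hd
      have hcf1 : coeff d f1 = if a ≤ d then coeff d f else 0 := rfl
      by_cases hle : a ≤ d
      · rw [hcf1, if_pos hle, sub_self] at hd; exact absurd rfl hd
      · rw [hcf1, if_neg hle, sub_zero] at hd
        exact (h d hd).resolve_left hle
    have hsum : f = f1 + (f - f1) := by ring
    exact hsum ▸ Submodule.add_mem_sup h1 h2

/-- Membership in the colon of an ideal by a two-generated ideal reduces to the generators. -/
lemma mem_colon_span_pair {R : Type*} [CommRing R] {J : Ideal R} {u v f : R} :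
    f ∈ J.colon (Ideal.span {u, v}) ↔ f * u ∈ J ∧ f * v ∈ J := by
  rw [Submodule.mem_colon]
  constructor
  · intro h
    exact ⟨by simpa using h u (Ideal.subset_span (by simp)),
      by simpa using h v (Ideal.subset_span (by simp))⟩
  · rintro ⟨h1, h2⟩ p hp
    induction hp using Submodule.span_induction with
    | mem g hg =>
      rcases hg with rfl | rfl
      · simpa using h1
      · simpa using h2
    | zero => simpa using J.zero_mem
    | add a b _ _ ha hb => rw [smul_add]; exact J.add_mem ha hb
    | smul r a _ ha =>
      rw [smul_comm]
      exact J.smul_mem r ha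

/-- Membership of `f * X^c` in a two-generated monomial ideal, coefficientwise in `f`. -/
lemma mul_monomial_mem_span_pair {σ K : Type*} [CommRing K] {f : MvPowerSeries σ K}
    {c b1 b2 : σ →₀ ℕ} :
    f * monomial c 1 ∈ Ideal.span {monomial b1 1, monomial b2 1} ↔
      ∀ d, coeff d f ≠ 0 → b1 ≤ d + c ∨ b2 ≤ d + c := by
  rw [mem_span_monomial2]
  constructor
  · intro h d hd
    refine h (d + c) ?_
    rw [coeff_add_mul_monomial, mul_one]
    exact hd
  · intro h d hd
    rw [coeff_mul_monomial] at hd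
    by_cases hle : c ≤ d
    · rw [if_pos hle, mul_one] at hd
      have := h (d - c) hd
      rwa [tsub_add_cancel_of_le hle] at this
    · rw [if_neg hle] at hd; exact absurd rfl hd

lemma finsupp_le_fin3 {a b : Fin 3 →₀ ℕ} :
    a ≤ b ↔ a 0 ≤ b 0 ∧ a 1 ≤ b 1 ∧ a 2 ≤ b 2 := by
  rw [Finsupp.le_def]
  constructor
  · exact fun h => ⟨h 0, h 1, h 2⟩
  · rintro ⟨h0, h1, h2⟩ i
    fin_cases i <;> assumption

lemma XX {σ K : Type*} [CommRing K] (s t : σ) (i j : ℕ) :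
    (X s : MvPowerSeries σ K) ^ i * X t ^ j = monomial (single s i + single t j) 1 := by
  rw [X_pow_eq, X_pow_eq, monomial_mul_monomial, one_mul]

lemma XXX {σ K : Type*} [CommRing K] (s t u : σ) (i j k : ℕ) :
    (X s : MvPowerSeries σ K) ^ i * X t ^ j * X u ^ k =
      monomial (single s i + single t j + single u k) 1 := by
  rw [XX, X_pow_eq, monomial_mul_monomial, one_mul]

end Aux

/-- For `I = (xy, yz)` in `R = K⟦x,y,z⟧` with `char K = p` prime and `e ≥ 1`,
`K_e = (I^[p^e] : I)` is generated by `x^(p^e) y^(p^e-1)`, `x^(p^e-1) y^(p^e-1) z^(p^e-1)`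
and `y^(p^e-1) z^(p^e)`. -/
theorem Ke_generators
    (K : Type*) [Field K] (p : ℕ) [Fact p.Prime] [CharP K p]
    (x y z : MvPowerSeries (Fin 3) K)
    (hx : x = X 0) (hy : y = X 1) (hz : z = X 2)
    (I : Ideal (MvPowerSeries (Fin 3) K)) (hI : I = Ideal.span {x * y, y * z})
    (e : ℕ) (he : 1 ≤ e) :
    (I.map (iterateFrobenius (MvPowerSeries (Fin 3) K) p e)).colon I =
      Ideal.span {x ^ p ^ e * y ^ (p ^ e - 1),
        x ^ (p ^ e - 1) * y ^ (p ^ e - 1) * z ^ (p ^ e - 1),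
        y ^ (p ^ e - 1) * z ^ p ^ e} := by
  subst hx hy hz hI
  have hq : 1 ≤ p ^ e := Nat.one_le_pow _ _ (Fact.out (p := p.Prime)).pos
  have hxy : (X 0 : MvPowerSeries (Fin 3) K) * X 1 =
      monomial (single 0 1 + single 1 1) 1 := by simpa using XX (K := K) 0 1 1 1
  have hyz : (X 1 : MvPowerSeries (Fin 3) K) * X 2 =
      monomial (single 1 1 + single 2 1) 1 := by simpa using XX (K := K) 1 2 1 1
  rw [Ideal.map_span, Set.image_insert_eq, Set.image_singleton,
    iterateFrobenius_def, iterateFrobenius_def, mul_pow, mul_pow,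
    XX 0 1 (p ^ e) (p ^ e), XX 1 2 (p ^ e) (p ^ e),
    XX 0 1 (p ^ e) (p ^ e - 1), XXX 0 1 2 (p ^ e - 1) (p ^ e - 1) (p ^ e - 1),
    XX 1 2 (p ^ e - 1) (p ^ e), hxy, hyz]
  ext f
  rw [mem_colon_span_pair, mul_monomial_mem_span_pair, mul_monomial_mem_span_pair,
    mem_span_monomial3]
  constructor
  · rintro ⟨h1, h2⟩ d hd
    have g1 := h1 d hd
    have g2 := h2 d hd
    simp only [finsupp_le_fin3, Finsupp.add_apply, Finsupp.single_apply] at g1 g2 ⊢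
    simp only [show ((0 : Fin 3) = 0) = True by simp, show ((1 : Fin 3) = 1) = True by simp,
      show ((2 : Fin 3) = 2) = True by simp, show ((0 : Fin 3) = 1) = False by simp,
      show ((0 : Fin 3) = 2) = False by simp, show ((1 : Fin 3) = 0) = False by simp,
      show ((1 : Fin 3) = 2) = False by simp, show ((2 : Fin 3) = 0) = False by simp,
      show ((2 : Fin 3) = 1) = False by simp, if_true, if_false] at g1 g2 ⊢
    omega
  · intro h
    constructor <;>
    · intro d hd
      have g := h d hd
      simp only [finsupp_le_fin3, Finsupp.add_apply, Finsupp.single_apply] at g ⊢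
      simp only [show ((0 : Fin 3) = 0) = True by simp, show ((1 : Fin 3) = 1) = True by simp,
        show ((2 : Fin 3) = 2) = True by simp, show ((0 : Fin 3) = 1) = False by simp,
        show ((0 : Fin 3) = 2) = False by simp, show ((1 : Fin 3) = 0) = False by simp,
        show ((1 : Fin 3) = 2) = False by simp, show ((2 : Fin 3) = 0) = False by simp,
        show ((2 : Fin 3) = 1) = False by simp, if_true, if_false] at g ⊢
      omega
end
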